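/- arXiv:1603.00668 — 4 statements merged into one kernel-verified Lean document; each statement's English description precedes it below -/
import Mathlib

section
/- For every 1 ≤ R ≤ D, the total squared POD projection error of the snapshots equals the sum of the truncated eigenvalues: Σ_{n=1}^N ‖u_n − P^R u_n‖_V² = Σ_{r=R+1}^N λ_r. -/
open scoped RealInnerProductSpace

/-- Orthogonal projection onto a submodule, as a plain function; it equals the usual
orthogonal projection whenever the submodule is finite-dimensional. -/
noncomputable def orthProj {V : Type*} [NormedAddCommGroup V] [InnerProductSpace ℝ V]
    (K : Submodule ℝ V) (x : V) : V := by
  classical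
  exact if h : FiniteDimensional ℝ K then
    haveI := h
    (K.orthogonalProjection x : V)
  else 0

/-- **POD projection error equals the sum of truncated eigenvalues.** For every `1 ≤ R ≤ D`, `∑ n, ‖u n - P^R (u n)‖² = ∑_{r ≥ R} λ r` (zero-based indexing), where `P^R` is the orthogonal projection onto the span of the first `R` POD basis functions. -/
theorem pod_truncation_error
    {V : Type*} [NormedAddCommGroup V] [InnerProductSpace ℝ V]
    {N D : ℕ} (hD : D ≤ N)
    (u : Fin N → V)
    (G : Matrix (Fin N) (Fin N) ℝ)
    (hG : ∀ i j : Fin N, G i j = ⟪u i, u j⟫)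
    (a : Fin N → Fin N → ℝ)
    (ha_orth : ∀ r s : Fin N, ∑ n : Fin N, a r n * a s n = if r = s then (1 : ℝ) else 0)
    (lam : Fin N → ℝ)
    (h_eig : ∀ r : Fin N, G.mulVec (a r) = lam r • a r)
    (h_mono : ∀ r s : Fin N, r ≤ s → lam s ≤ lam r)
    (h_nonneg : ∀ r : Fin N, 0 ≤ lam r)
    (h_pos : ∀ r : Fin N, (r : ℕ) < D → 0 < lam r)
    (h_zero : ∀ r : Fin N, D ≤ (r : ℕ) → lam r = 0)
    (φ : Fin N → V)
    (hφ : ∀ r : Fin N, (r : ℕ) < D →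
      φ r = (Real.sqrt (lam r))⁻¹ • ∑ n : Fin N, a r n • u n) :
    ∀ R : ℕ, 1 ≤ R → R ≤ D →
      ∑ n : Fin N,
          ‖u n - orthProj (Submodule.span ℝ (φ '' {r : Fin N | (r : ℕ) < R})) (u n)‖ ^ 2
        = ∑ r ∈ Finset.univ.filter (fun r : Fin N => R ≤ (r : ℕ)), lam r := by
  classical
  intro R hR1 hRD
  -- eigenvalue equation componentwise
  have hGsum : ∀ (r n : Fin N), ∑ m, G n m * a r m = lam r * a r n := by
    intro r n
    have := congrFun (h_eig r) n
    simpa [Matrix.mulVec, dotProduct] using this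
  -- inner products of snapshots with POD basis
  have hinner_u : ∀ r : Fin N, (r : ℕ) < D → ∀ n : Fin N,
      ⟪u n, φ r⟫ = Real.sqrt (lam r) * a r n := by
    intro r hr n
    have hlam : 0 < lam r := h_pos r hr
    have hs : Real.sqrt (lam r) ≠ 0 := ne_of_gt (Real.sqrt_pos.2 hlam)
    rw [hφ r hr, real_inner_smul_right, inner_sum]
    have : ∑ m, ⟪u n, a r m • u m⟫ = lam r * a r n := by
      have : ∑ m, ⟪u n, a r m • u m⟫ = ∑ m, G n m * a r m := by
        refine Finset.sum_congr rfl fun m _ => ?_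
        rw [real_inner_smul_right, hG n m, mul_comm]
      rw [this, hGsum r n]
    rw [this, inv_mul_eq_iff_eq_mul₀ hs, ← mul_assoc, Real.mul_self_sqrt hlam.le]
  -- orthonormality of POD basis
  have hinner_φ : ∀ r s : Fin N, (r : ℕ) < D → (s : ℕ) < D →
      ⟪φ r, φ s⟫ = if r = s then (1 : ℝ) else 0 := by
    intro r s hr hs
    have hlam : 0 < lam r := h_pos r hr
    have hsne : Real.sqrt (lam r) ≠ 0 := ne_of_gt (Real.sqrt_pos.2 hlam)
    rw [hφ r hr, real_inner_smul_left, sum_inner]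
    have h1 : ∑ n, ⟪a r n • u n, φ s⟫ = Real.sqrt (lam s) * (if r = s then (1:ℝ) else 0) := by
      have : ∑ n, ⟪a r n • u n, φ s⟫ = ∑ n, Real.sqrt (lam s) * (a r n * a s n) := by
        refine Finset.sum_congr rfl fun n _ => ?_
        rw [real_inner_smul_left, hinner_u s hs n]; ring
      rw [this, ← Finset.mul_sum, ha_orth r s]
    rw [h1]
    by_cases h : r = s
    · subst h
      simp [hsne]
    · simp [h]
  -- column orthonormality via matrices
  have hcol : ∀ k m : Fin N, ∑ r, a r k * a r m = if k = m then (1 : ℝ) else 0 := by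
    intro k m
    set A : Matrix (Fin N) (Fin N) ℝ := Matrix.of a with hA
    have hAAt : A * A.transpose = 1 := by
      ext r s
      simpa [Matrix.mul_apply, Matrix.one_apply, hA] using ha_orth r s
    have hAtA : A.transpose * A = 1 := mul_eq_one_comm.1 hAAt
    have := congrFun (congrFun hAtA k) m
    simpa [Matrix.mul_apply, Matrix.one_apply, hA] using this
  -- spectral decomposition of the Gram matrix
  have hGspec : ∀ n m : Fin N, G n m = ∑ r, lam r * (a r n * a r m) := by
    intro n m
    have : ∑ r, lam r * (a r n * a r m) = ∑ r, (∑ k, G n k * a r k) * a r m := by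
      refine Finset.sum_congr rfl fun r _ => ?_
      rw [hGsum r n]; ring
    rw [this]
    have h2 : ∑ r, (∑ k, G n k * a r k) * a r m = ∑ r, ∑ k, G n k * a r k * a r m := by
      refine Finset.sum_congr rfl fun r _ => ?_
      rw [Finset.sum_mul]
    rw [h2, Finset.sum_comm]
    have h3 : ∑ k, ∑ r, G n k * a r k * a r m = ∑ k, G n k * ∑ r, a r k * a r m := by
      refine Finset.sum_congr rfl fun k _ => ?_
      rw [Finset.mul_sum]
      refine Finset.sum_congr rfl fun r _ => by ring
    rw [h3]
    simp [hcol]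
  -- the subspace and its finite-dimensionality
  set K : Submodule ℝ V := Submodule.span ℝ (φ '' {r : Fin N | (r : ℕ) < R}) with hK
  haveI hfin : FiniteDimensional ℝ K :=
    FiniteDimensional.span_of_finite ℝ ((Set.toFinite _).image φ)
  have horth : ∀ x : V, orthProj K x = (K.orthogonalProjection x : V) := by
    intro x
    simp [orthProj, dif_pos hfin]
  -- candidate projection
  set v : Fin N → V := fun n =>
    ∑ r ∈ Finset.univ.filter (fun r : Fin N => (r : ℕ) < R),
      (Real.sqrt (lam r) * a r n) • φ r with hv
  have hvK : ∀ n, v n ∈ K := by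
    intro n
    refine Submodule.sum_mem _ fun r hr => Submodule.smul_mem _ _ ?_
    exact Submodule.subset_span ⟨r, Finset.mem_filter.1 hr |>.2, rfl⟩
  -- key inner products with v
  have hinner_vφ : ∀ n : Fin N, ∀ s : Fin N, (s : ℕ) < R →
      ⟪v n, φ s⟫ = Real.sqrt (lam s) * a s n := by
    intro n s hsR
    have hsD : (s : ℕ) < D := lt_of_lt_of_le hsR hRD
    rw [hv]
    rw [sum_inner]
    have : ∀ r ∈ Finset.univ.filter (fun r : Fin N => (r : ℕ) < R),
        ⟪(Real.sqrt (lam r) * a r n) • φ r, φ s⟫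
          = if r = s then Real.sqrt (lam s) * a s n else 0 := by
      intro r hr
      have hrR := (Finset.mem_filter.1 hr).2
      have hrD : (r : ℕ) < D := lt_of_lt_of_le hrR hRD
      rw [real_inner_smul_left, hinner_φ r s hrD hsD]
      by_cases h : r = s
      · subst h; simp
      · simp [h]
    rw [Finset.sum_congr rfl this, Finset.sum_ite_eq' _ s]
    simp [hsR]
  -- v n is the orthogonal projection of u n
  have hproj : ∀ n, (K.orthogonalProjection (u n) : V) = v n := by
    intro n
    refine K.eq_starProjection_of_mem_of_inner_eq_zero (hvK n) ?_
    intro w hw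
    rw [hK] at hw
    induction hw using Submodule.span_induction with
    | mem x hx =>
      obtain ⟨s, hs, rfl⟩ := hx
      have hsR : (s : ℕ) < R := hs
      have hsD : (s : ℕ) < D := lt_of_lt_of_le hsR hRD
      rw [inner_sub_left, hinner_u s hsD n, hinner_vφ n s hsR, sub_self]
    | zero => simp
    | add x y _ _ hx hy => rw [inner_add_right, hx, hy, add_zero]
    | smul c x _ hx => rw [real_inner_smul_right, hx, mul_zero]
  -- squared error for each snapshot
  have herr : ∀ n : Fin N, ‖u n - v n‖ ^ 2
      = ‖u n‖ ^ 2 - ∑ r ∈ Finset.univ.filter (fun r : Fin N => (r : ℕ) < R),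
          lam r * (a r n * a r n) := by
    intro n
    have huv : ⟪u n, v n⟫
        = ∑ r ∈ Finset.univ.filter (fun r : Fin N => (r : ℕ) < R),
            lam r * (a r n * a r n) := by
      rw [hv, inner_sum]
      refine Finset.sum_congr rfl fun r hr => ?_
      have hrR := (Finset.mem_filter.1 hr).2
      have hrD : (r : ℕ) < D := lt_of_lt_of_le hrR hRD
      rw [real_inner_smul_right, hinner_u r hrD n]
      have : Real.sqrt (lam r) * Real.sqrt (lam r) = lam r :=
        Real.mul_self_sqrt (h_pos r hrD).le
      nlinarith [this]
    have hvv : ⟪v n, v n⟫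
        = ∑ r ∈ Finset.univ.filter (fun r : Fin N => (r : ℕ) < R),
            lam r * (a r n * a r n) := by
      rw [hv, inner_sum]
      have : ∀ r ∈ Finset.univ.filter (fun r : Fin N => (r : ℕ) < R),
          ⟪(∑ s ∈ Finset.univ.filter (fun s : Fin N => (s : ℕ) < R),
              (Real.sqrt (lam s) * a s n) • φ s), (Real.sqrt (lam r) * a r n) • φ r⟫
            = lam r * (a r n * a r n) := by
        intro r hr
        have hrR := (Finset.mem_filter.1 hr).2
        have hrD : (r : ℕ) < D := lt_of_lt_of_le hrR hRD
        rw [real_inner_smul_right, hinner_vφ n r hrR]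
        have : Real.sqrt (lam r) * Real.sqrt (lam r) = lam r :=
          Real.mul_self_sqrt (h_pos r hrD).le
        nlinarith [this]
      rw [Finset.sum_congr rfl this]
    have hnsq : ‖v n‖ ^ 2 = ⟪v n, v n⟫ := (real_inner_self_eq_norm_sq _)|>.symm
    rw [norm_sub_sq_real, huv, hnsq, hvv]
    ring
  -- total energy
  have htot : ∑ n, ‖u n‖ ^ 2 = ∑ r, lam r := by
    have h1 : ∀ n : Fin N, ‖u n‖ ^ 2 = ∑ r, lam r * (a r n * a r n) := by
      intro n
      rw [← real_inner_self_eq_norm_sq, ← hG n n, hGspec n n]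
    rw [Finset.sum_congr rfl fun n _ => h1 n, Finset.sum_comm]
    refine Finset.sum_congr rfl fun r _ => ?_
    rw [← Finset.mul_sum, ha_orth r r, if_pos rfl, mul_one]
  -- put everything together
  have hsum : ∑ n : Fin N, ‖u n - orthProj K (u n)‖ ^ 2
      = ∑ r, lam r - ∑ r ∈ Finset.univ.filter (fun r : Fin N => (r : ℕ) < R), lam r := by
    have : ∀ n : Fin N, ‖u n - orthProj K (u n)‖ ^ 2
        = ‖u n‖ ^ 2 - ∑ r ∈ Finset.univ.filter (fun r : Fin N => (r : ℕ) < R),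
            lam r * (a r n * a r n) := by
      intro n
      rw [horth, hproj, herr]
    rw [Finset.sum_congr rfl fun n _ => this n, Finset.sum_sub_distrib, htot]
    congr 1
    rw [Finset.sum_comm]
    refine Finset.sum_congr rfl fun r hr => ?_
    rw [← Finset.mul_sum, ha_orth r r, if_pos rfl, mul_one]
  rw [hsum]
  have hsplit := Finset.sum_filter_add_sum_filter_not Finset.univ
    (fun r : Fin N => (r : ℕ) < R) lam
  have : (Finset.univ.filter (fun r : Fin N => ¬ (r : ℕ) < R))
      = Finset.univ.filter (fun r : Fin N => R ≤ (r : ℕ)) := by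
    refine Finset.filter_congr fun r _ => ?_
    simp [not_lt]
  rw [this] at hsplit
  linarith [hsplit]
end

section
/- The POD basis is optimal in the mean-square sense: for every 1 ≤ R ≤ D and every V-orthonormal family ψ_1,…,ψ_R ∈ V, Σ_{n=1}^N ‖u_n − Σ_{k=1}^R (u_n, ψ_k)_V ψ_k‖_V² ≥ Σ_{r=R+1}^N λ_r; consequently the POD basis functions φ_1,…,φ_R attain the minimum of this quantity over all V-orthonormal families of size R. -/
open scoped RealInnerProductSpace

/-- Error of orthogonal projection onto a finite orthonormal family. -/
lemma pod_proj_err {V : Type*} [NormedAddCommGroup V] [InnerProductSpace ℝ V]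
    {ι : Type*} [DecidableEq ι] (s : Finset ι) (ψ : ι → V)
    (h : ∀ i ∈ s, ∀ j ∈ s, ⟪ψ i, ψ j⟫ = if i = j then (1:ℝ) else 0)
    (x : V) :
    ‖x - ∑ k ∈ s, ⟪x, ψ k⟫ • ψ k‖ ^ 2 = ‖x‖ ^ 2 - ∑ k ∈ s, ⟪x, ψ k⟫ ^ 2 := by
  set p := ∑ k ∈ s, ⟪x, ψ k⟫ • ψ k with hp
  have h1 : ⟪x, p⟫ = ∑ k ∈ s, ⟪x, ψ k⟫ ^ 2 := by
    rw [hp, inner_sum]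
    refine Finset.sum_congr rfl fun k hk => ?_
    rw [real_inner_smul_right]; ring
  have h2 : ⟪p, p⟫ = ∑ k ∈ s, ⟪x, ψ k⟫ ^ 2 := by
    rw [hp, sum_inner]
    refine Finset.sum_congr rfl fun i hi => ?_
    rw [real_inner_smul_left, inner_sum]
    rw [Finset.sum_eq_single i]
    · rw [real_inner_smul_right, h i hi i hi, if_pos rfl]; ring
    · intro j hj hne
      rw [real_inner_smul_right, h i hi j hj, if_neg (Ne.symm hne)]; ring
    · intro hi'; exact absurd hi hi'
  have h3 : ‖p‖ ^ 2 = ∑ k ∈ s, ⟪x, ψ k⟫ ^ 2 := by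
    rw [← real_inner_self_eq_norm_sq, h2]
  rw [norm_sub_sq_real, h1, h3]; ring

/-- Bessel's inequality for a finite orthonormal family. -/
lemma pod_bessel {V : Type*} [NormedAddCommGroup V] [InnerProductSpace ℝ V]
    {ι : Type*} [DecidableEq ι] (s : Finset ι) (ψ : ι → V)
    (h : ∀ i ∈ s, ∀ j ∈ s, ⟪ψ i, ψ j⟫ = if i = j then (1:ℝ) else 0)
    (x : V) :
    ∑ k ∈ s, ⟪x, ψ k⟫ ^ 2 ≤ ‖x‖ ^ 2 := by
  have := pod_proj_err s ψ h x
  nlinarith [sq_nonneg (‖x - ∑ k ∈ s, ⟪x, ψ k⟫ • ψ k‖)]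

/-- Rearrangement-type bound. -/
lemma pod_rearr {N R : ℕ} (lam t : Fin N → ℝ)
    (hmono : ∀ r s : Fin N, r ≤ s → lam s ≤ lam r)
    (hnn : ∀ r, 0 ≤ lam r) (ht0 : ∀ r, 0 ≤ t r) (ht1 : ∀ r, t r ≤ 1)
    (hsum : ∑ r, t r ≤ (R : ℝ)) :
    ∑ r, lam r * t r ≤ ∑ r ∈ Finset.univ.filter (fun r : Fin N => (r : ℕ) < R), lam r := by
  classical
  set c : ℝ := if h : R < N then lam ⟨R, h⟩ else 0 with hc
  have hc0 : 0 ≤ c := by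
    rw [hc]; split
    · exact hnn _
    · exact le_refl 0
  have hlow : ∀ r : Fin N, (r : ℕ) < R → c ≤ lam r := by
    intro r hr
    rw [hc]; split
    · next h => exact hmono r ⟨R, h⟩ (le_of_lt hr)
    · exact hnn r
  have hhigh : ∀ r : Fin N, R ≤ (r : ℕ) → lam r ≤ c := by
    intro r hr
    have hRN : R < N := lt_of_le_of_lt hr r.isLt
    rw [hc, dif_pos hRN]
    exact hmono ⟨R, hRN⟩ r hr
  set s := Finset.univ.filter (fun r : Fin N => (r : ℕ) < R) with hs
  have hcard : c * (s.card : ℝ) = c * R := by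
    rcases lt_or_ge R N with hRN | hRN
    · congr 2
      have : s = Finset.Iio (⟨R, hRN⟩ : Fin N) := by
        ext r; simp [hs, Fin.lt_def]
      rw [this, Fin.card_Iio]
    · rw [hc, dif_neg (not_lt.mpr hRN)]; ring
  -- split the sum
  have hsplit : ∑ r, lam r * t r = ∑ r ∈ s, lam r * t r + ∑ r ∈ sᶜ, lam r * t r :=
    (Finset.sum_add_sum_compl s _).symm
  have h1 : ∑ r ∈ s, lam r * t r ≤ ∑ r ∈ s, (lam r + c * t r - c) := by
    refine Finset.sum_le_sum fun r hr => ?_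
    have hrR : (r : ℕ) < R := by simpa [hs] using hr
    nlinarith [hlow r hrR, ht1 r]
  have h2 : ∑ r ∈ sᶜ, lam r * t r ≤ ∑ r ∈ sᶜ, c * t r := by
    refine Finset.sum_le_sum fun r hr => ?_
    have hrR : R ≤ (r : ℕ) := by
      simp only [hs, Finset.mem_compl, Finset.mem_filter, Finset.mem_univ, true_and,
        not_lt] at hr
      exact hr
    nlinarith [hhigh r hrR, ht0 r]
  have hts : c * (∑ r ∈ s, t r) + c * (∑ r ∈ sᶜ, t r) = c * ∑ r, t r := by
    rw [← mul_add, Finset.sum_add_sum_compl]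
  have hct : c * ∑ r, t r ≤ c * R := mul_le_mul_of_nonneg_left hsum hc0
  have : ∑ r, lam r * t r ≤ ∑ r ∈ s, lam r + c * ∑ r, t r - c * R := by
    rw [hsplit]
    have := Finset.sum_sub_distrib (s := s) (f := fun r => lam r + c * t r) (g := fun _ => c)
    calc ∑ r ∈ s, lam r * t r + ∑ r ∈ sᶜ, lam r * t r
        ≤ ∑ r ∈ s, (lam r + c * t r - c) + ∑ r ∈ sᶜ, c * t r := add_le_add h1 h2
      _ = ∑ r ∈ s, lam r + (c * (∑ r ∈ s, t r) + c * (∑ r ∈ sᶜ, t r)) - c * s.card := by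
          rw [Finset.sum_sub_distrib, Finset.sum_add_distrib, ← Finset.mul_sum,
            ← Finset.mul_sum, Finset.sum_const, nsmul_eq_mul, mul_comm (s.card : ℝ) c]
          ring
      _ = ∑ r ∈ s, lam r + c * ∑ r, t r - c * R := by rw [hts, hcard]
  linarith

/-- Double-sum "trace" identity from column orthonormality. -/
lemma pod_trace {N : ℕ} (a : Fin N → Fin N → ℝ)
    (hcol : ∀ n m : Fin N, ∑ r, a r n * a r m = if n = m then (1:ℝ) else 0)
    (M : Fin N → Fin N → ℝ) :
    ∑ r, ∑ n, ∑ m, a r n * a r m * M n m = ∑ n, M n n := by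
  calc ∑ r, ∑ n, ∑ m, a r n * a r m * M n m
      = ∑ n, ∑ m, ∑ r, a r n * a r m * M n m := by
        rw [Finset.sum_comm]
        exact Finset.sum_congr rfl fun n _ => Finset.sum_comm
    _ = ∑ n, ∑ m, (∑ r, a r n * a r m) * M n m := by
        refine Finset.sum_congr rfl fun n _ => Finset.sum_congr rfl fun m _ => ?_
        rw [Finset.sum_mul]
    _ = ∑ n, M n n := by
        refine Finset.sum_congr rfl fun n _ => ?_
        simp [hcol, Finset.sum_ite_eq]

/-- **Mean-square optimality of the POD basis.** For every `1 ≤ R ≤ D` and every `V`-orthonormal family `ψ 1, …, ψ R`, the mean-square snapshot approximation error is at least `∑_{r ≥ R} λ r`, and the POD basis functions `φ 0, …, φ (R-1)` attain this minimum. -/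
theorem pod_optimality
    {V : Type*} [NormedAddCommGroup V] [InnerProductSpace ℝ V]
    {N D : ℕ} (hD : D ≤ N)
    (u : Fin N → V)
    (G : Matrix (Fin N) (Fin N) ℝ)
    (hG : ∀ i j : Fin N, G i j = ⟪u i, u j⟫)
    (a : Fin N → Fin N → ℝ)
    (ha_orth : ∀ r s : Fin N, ∑ n : Fin N, a r n * a s n = if r = s then (1 : ℝ) else 0)
    (lam : Fin N → ℝ)
    (h_eig : ∀ r : Fin N, G.mulVec (a r) = lam r • a r)
    (h_mono : ∀ r s : Fin N, r ≤ s → lam s ≤ lam r)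
    (h_nonneg : ∀ r : Fin N, 0 ≤ lam r)
    (h_pos : ∀ r : Fin N, (r : ℕ) < D → 0 < lam r)
    (h_zero : ∀ r : Fin N, D ≤ (r : ℕ) → lam r = 0)
    (φ : Fin N → V)
    (hφ : ∀ r : Fin N, (r : ℕ) < D →
      φ r = (Real.sqrt (lam r))⁻¹ • ∑ n : Fin N, a r n • u n) :
    ∀ R : ℕ, 1 ≤ R → R ≤ D →
      (∀ ψ : Fin R → V, Orthonormal ℝ ψ →
        ∑ r ∈ Finset.univ.filter (fun r : Fin N => R ≤ (r : ℕ)), lam r ≤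
          ∑ n : Fin N, ‖u n - ∑ k : Fin R, ⟪u n, ψ k⟫ • ψ k‖ ^ 2) ∧
      ∑ n : Fin N,
          ‖u n - ∑ k ∈ Finset.univ.filter (fun k : Fin N => (k : ℕ) < R),
            ⟪u n, φ k⟫ • φ k‖ ^ 2
        = ∑ r ∈ Finset.univ.filter (fun r : Fin N => R ≤ (r : ℕ)), lam r := by
  classical
  -- column orthonormality
  have hcol : ∀ n m : Fin N, ∑ r, a r n * a r m = if n = m then (1:ℝ) else 0 := by
    have hAAt : (Matrix.of a) * (Matrix.of a).transpose = 1 := by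
      ext r s
      simp only [Matrix.mul_apply, Matrix.transpose_apply, Matrix.of_apply, Matrix.one_apply]
      exact ha_orth r s
    have hAtA : (Matrix.of a).transpose * (Matrix.of a) = 1 := mul_eq_one_comm.mp hAAt
    intro n m
    have h := Matrix.ext_iff.mpr hAtA n m
    simpa [Matrix.mul_apply, Matrix.transpose_apply, Matrix.of_apply, Matrix.one_apply] using h
  -- inner products with the unnormalized POD vectors
  have hUS : ∀ (n r : Fin N), ⟪u n, ∑ m, a r m • u m⟫ = lam r * a r n := by
    intro n r
    rw [inner_sum]
    have h1 : ∀ m, ⟪u n, a r m • u m⟫ = G n m * a r m := by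
      intro m; rw [real_inner_smul_right, hG]; ring
    rw [Finset.sum_congr rfl fun m _ => h1 m]
    have h := congrFun (h_eig r) n
    simpa [Matrix.mulVec, dotProduct] using h
  have hSS : ∀ r s : Fin N,
      ⟪∑ n, a r n • u n, ∑ n, a s n • u n⟫ = if r = s then lam s else 0 := by
    intro r s
    rw [sum_inner]
    have h1 : ∀ n, ⟪a r n • u n, ∑ m, a s m • u m⟫ = lam s * (a r n * a s n) := by
      intro n; rw [real_inner_smul_left, hUS n s]; ring
    rw [Finset.sum_congr rfl fun n _ => h1 n, ← Finset.mul_sum, ha_orth r s]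
    split <;> simp
  -- values of inner products with φ
  have hφval : ∀ r : Fin N, (r:ℕ) < D → ∀ n, ⟪u n, φ r⟫ = Real.sqrt (lam r) * a r n := by
    intro r hr n
    have hl : 0 < lam r := h_pos r hr
    have hms : Real.sqrt (lam r) * Real.sqrt (lam r) = lam r := Real.mul_self_sqrt hl.le
    have hne : Real.sqrt (lam r) ≠ 0 := ne_of_gt (Real.sqrt_pos.mpr hl)
    rw [hφ r hr, real_inner_smul_right, hUS n r]
    field_simp
    linear_combination (-(a r n)) * hms
  have hφφ : ∀ r : Fin N, (r:ℕ) < D → ∀ s : Fin N, (s:ℕ) < D →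
      ⟪φ r, φ s⟫ = if r = s then (1:ℝ) else 0 := by
    intro r hr s hs
    rw [hφ r hr, hφ s hs, real_inner_smul_left, real_inner_smul_right, hSS r s]
    split
    · next h =>
      subst h
      have hl : 0 < lam r := h_pos r hr
      have hms : Real.sqrt (lam r) * Real.sqrt (lam r) = lam r := Real.mul_self_sqrt hl.le
      have hne : Real.sqrt (lam r) ≠ 0 := ne_of_gt (Real.sqrt_pos.mpr hl)
      field_simp
      rw [sq, hms]
    · simp
  -- the key Parseval-type identity
  have hkey : ∀ x : V, ∑ n, ⟪u n, x⟫ ^ 2 = ∑ r, lam r * ⟪φ r, x⟫ ^ 2 := by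
    intro x
    have expand : ∀ r : Fin N, ⟪∑ n, a r n • u n, x⟫ = ∑ n, a r n * ⟪u n, x⟫ := by
      intro r; rw [sum_inner]
      exact Finset.sum_congr rfl fun n _ => real_inner_smul_left _ _ _
    have step1 : ∑ r, ⟪∑ n, a r n • u n, x⟫ ^ 2 = ∑ n, ⟪u n, x⟫ ^ 2 := by
      calc ∑ r, ⟪∑ n, a r n • u n, x⟫ ^ 2
          = ∑ r, ∑ n, ∑ m, a r n * a r m * (⟪u n, x⟫ * ⟪u m, x⟫) := by
            refine Finset.sum_congr rfl fun r _ => ?_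
            rw [expand r, sq, Finset.sum_mul_sum]
            exact Finset.sum_congr rfl fun n _ => Finset.sum_congr rfl fun m _ => by ring
        _ = ∑ n, ⟪u n, x⟫ * ⟪u n, x⟫ := pod_trace a hcol _
        _ = ∑ n, ⟪u n, x⟫ ^ 2 := by refine Finset.sum_congr rfl fun n _ => (sq _).symm
    rw [← step1]
    refine Finset.sum_congr rfl fun r _ => ?_
    rcases lt_or_ge (r:ℕ) D with hr | hr
    · have hl : 0 < lam r := h_pos r hr
      have hms : Real.sqrt (lam r) * Real.sqrt (lam r) = lam r := Real.mul_self_sqrt hl.le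
      have hne : Real.sqrt (lam r) ≠ 0 := ne_of_gt (Real.sqrt_pos.mpr hl)
      rw [hφ r hr, real_inner_smul_left, mul_pow]
      field_simp
      rw [sq (Real.sqrt (lam r)), hms]
    · have h0 : lam r = 0 := h_zero r hr
      have hSr0 : (∑ n, a r n • u n) = (0:V) := by
        have h := hSS r r
        rw [if_pos rfl, h0] at h
        exact inner_self_eq_zero.mp h
      rw [hSr0, h0]; simp
  -- the trace identity
  have htrace : ∑ n, ‖u n‖ ^ 2 = ∑ r, lam r := by
    have e1 : ∀ r : Fin N, ⟪∑ n, a r n • u n, ∑ m, a r m • u m⟫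
        = ∑ n, ∑ m, a r n * a r m * ⟪u n, u m⟫ := by
      intro r
      rw [sum_inner]
      refine Finset.sum_congr rfl fun n _ => ?_
      rw [real_inner_smul_left, inner_sum, Finset.mul_sum]
      refine Finset.sum_congr rfl fun m _ => ?_
      rw [real_inner_smul_right]; ring
    calc ∑ n, ‖u n‖ ^ 2 = ∑ n, ⟪u n, u n⟫ := by
          refine Finset.sum_congr rfl fun n _ => (real_inner_self_eq_norm_sq _).symm
      _ = ∑ r, ∑ n, ∑ m, a r n * a r m * ⟪u n, u m⟫ := (pod_trace a hcol (fun n m => ⟪u n, u m⟫)).symm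
      _ = ∑ r, ⟪∑ n, a r n • u n, ∑ m, a r m • u m⟫ :=
          Finset.sum_congr rfl fun r _ => (e1 r).symm
      _ = ∑ r, lam r := Finset.sum_congr rfl fun r _ => by rw [hSS r r, if_pos rfl]
  -- sum splitting
  have hsplitsum : ∀ (R : ℕ) (f : Fin N → ℝ),
      ∑ r ∈ Finset.univ.filter (fun r : Fin N => (r:ℕ) < R), f r
        + ∑ r ∈ Finset.univ.filter (fun r : Fin N => R ≤ (r:ℕ)), f r = ∑ r, f r := by
    intro R f
    have h : (Finset.univ.filter (fun r : Fin N => R ≤ (r:ℕ)))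
        = Finset.univ.filter (fun r : Fin N => ¬ (r:ℕ) < R) := by
      apply Finset.filter_congr; intro r _; simp [not_lt]
    rw [h, Finset.sum_filter_add_sum_filter_not]
  intro R hR1 hRD
  constructor
  · intro ψ hψ
    have hψite : ∀ i j : Fin R, ⟪ψ i, ψ j⟫ = if i = j then (1:ℝ) else 0 :=
      fun i j => orthonormal_iff_ite.mp hψ i j
    set t : Fin N → ℝ := fun r => if (r:ℕ) < D then ∑ k : Fin R, ⟪φ r, ψ k⟫ ^ 2 else 0
      with ht
    have herr : ∑ n, ‖u n - ∑ k : Fin R, ⟪u n, ψ k⟫ • ψ k‖ ^ 2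
        = ∑ n, ‖u n‖ ^ 2 - ∑ n, ∑ k : Fin R, ⟪u n, ψ k⟫ ^ 2 := by
      rw [← Finset.sum_sub_distrib]
      exact Finset.sum_congr rfl fun n _ =>
        pod_proj_err Finset.univ ψ (fun i _ j _ => hψite i j) (u n)
    have hinner : ∑ n, ∑ k : Fin R, ⟪u n, ψ k⟫ ^ 2 = ∑ r, lam r * t r := by
      rw [Finset.sum_comm]
      calc ∑ k : Fin R, ∑ n, ⟪u n, ψ k⟫ ^ 2
          = ∑ k : Fin R, ∑ r, lam r * ⟪φ r, ψ k⟫ ^ 2 :=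
            Finset.sum_congr rfl fun k _ => hkey (ψ k)
        _ = ∑ r, ∑ k : Fin R, lam r * ⟪φ r, ψ k⟫ ^ 2 := Finset.sum_comm
        _ = ∑ r, lam r * t r := by
            refine Finset.sum_congr rfl fun r _ => ?_
            rw [← Finset.mul_sum]
            simp only [ht]
            by_cases h : (r:ℕ) < D
            · rw [if_pos h]
            · rw [if_neg h, h_zero r (le_of_not_gt h)]; ring
    have ht0 : ∀ r, 0 ≤ t r := by
      intro r; simp only [ht]; split
      · exact Finset.sum_nonneg fun k _ => sq_nonneg _
      · exact le_refl 0
    have ht1 : ∀ r, t r ≤ 1 := by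
      intro r; simp only [ht]; split
      · next h =>
        have hb := pod_bessel Finset.univ ψ (fun i _ j _ => hψite i j) (φ r)
        have hn : ‖φ r‖ ^ 2 = 1 := by
          rw [← real_inner_self_eq_norm_sq, hφφ r h r h, if_pos rfl]
        rw [hn] at hb; exact hb
      · norm_num
    have htsum : ∑ r, t r ≤ (R : ℝ) := by
      have h1 : ∑ r, t r = ∑ r ∈ Finset.univ.filter (fun r : Fin N => (r:ℕ) < D),
          ∑ k : Fin R, ⟪φ r, ψ k⟫ ^ 2 := by
        rw [Finset.sum_filter]
      have horthD : ∀ i ∈ Finset.univ.filter (fun r : Fin N => (r:ℕ) < D),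
          ∀ j ∈ Finset.univ.filter (fun r : Fin N => (r:ℕ) < D),
          ⟪φ i, φ j⟫ = if i = j then (1:ℝ) else 0 := by
        intro i hi j hj
        simp only [Finset.mem_filter, Finset.mem_univ, true_and] at hi hj
        exact hφφ i hi j hj
      have h2 : ∀ k : Fin R, ∑ r ∈ Finset.univ.filter (fun r : Fin N => (r:ℕ) < D),
          ⟪φ r, ψ k⟫ ^ 2 ≤ 1 := by
        intro k
        have hb := pod_bessel _ φ horthD (ψ k)
        have hn : ‖ψ k‖ ^ 2 = 1 := by rw [hψ.1 k]; norm_num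
        calc ∑ r ∈ Finset.univ.filter (fun r : Fin N => (r:ℕ) < D), ⟪φ r, ψ k⟫ ^ 2
            = ∑ r ∈ Finset.univ.filter (fun r : Fin N => (r:ℕ) < D), ⟪ψ k, φ r⟫ ^ 2 :=
              Finset.sum_congr rfl fun r _ => by rw [real_inner_comm]
          _ ≤ 1 := hn ▸ hb
      calc ∑ r, t r
          = ∑ k : Fin R, ∑ r ∈ Finset.univ.filter (fun r : Fin N => (r:ℕ) < D),
              ⟪φ r, ψ k⟫ ^ 2 := by rw [h1, Finset.sum_comm]
        _ ≤ ∑ _k : Fin R, (1:ℝ) := Finset.sum_le_sum fun k _ => h2 k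
        _ = R := by simp
    have hre := pod_rearr lam t h_mono h_nonneg ht0 ht1 htsum
    have hsp := hsplitsum R lam
    rw [herr, hinner, htrace]
    linarith
  · set sR := Finset.univ.filter (fun k : Fin N => (k:ℕ) < R) with hsR
    have horthR : ∀ i ∈ sR, ∀ j ∈ sR, ⟪φ i, φ j⟫ = if i = j then (1:ℝ) else 0 := by
      intro i hi j hj
      simp only [hsR, Finset.mem_filter, Finset.mem_univ, true_and] at hi hj
      exact hφφ i (lt_of_lt_of_le hi hRD) j (lt_of_lt_of_le hj hRD)
    have herr2 : ∑ n, ‖u n - ∑ k ∈ sR, ⟪u n, φ k⟫ • φ k‖ ^ 2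
        = ∑ n, ‖u n‖ ^ 2 - ∑ n, ∑ k ∈ sR, ⟪u n, φ k⟫ ^ 2 := by
      rw [← Finset.sum_sub_distrib]
      exact Finset.sum_congr rfl fun n _ => pod_proj_err sR φ horthR (u n)
    have hval : ∑ n, ∑ k ∈ sR, ⟪u n, φ k⟫ ^ 2 = ∑ k ∈ sR, lam k := by
      rw [Finset.sum_comm]
      refine Finset.sum_congr rfl fun k hk => ?_
      have hkD : (k:ℕ) < D := by
        simp only [hsR, Finset.mem_filter, Finset.mem_univ, true_and] at hk
        exact lt_of_lt_of_le hk hRD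
      have hms : Real.sqrt (lam k) * Real.sqrt (lam k) = lam k :=
        Real.mul_self_sqrt (h_pos k hkD).le
      have hterm : ∀ n, ⟪u n, φ k⟫ ^ 2 = lam k * (a k n * a k n) := by
        intro n
        rw [hφval k hkD n]
        linear_combination (a k n * a k n) * hms
      rw [Finset.sum_congr rfl fun n _ => hterm n, ← Finset.mul_sum, ha_orth k k,
        if_pos rfl, mul_one]
    rw [herr2, hval, htrace]
    have hsp := hsplitsum R lam
    rw [← hsR] at hsp
    linarith
end

section
/- Suppose u ∈ V satisfies a(u, v) = f(v) for all v ∈ V. Let V_n and V^R be finite-dimensional subspaces of V, let u_n be a Galerkin solution on V_n, and let u^R be a Galerkin solution on V^R. Then the error of the reduced-order solution with respect to the true solution splits as ‖u − u^R‖_V ≤ (γ/α) ‖u_n − P_{V^R} u_n‖_V + (γ/α)² ‖u − P_{V_n} u‖_V. -/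
open scoped RealInnerProductSpace

lemma cea_aux {V : Type*} [NormedAddCommGroup V] [InnerProductSpace ℝ V]
    (a : V →ₗ[ℝ] V →ₗ[ℝ] ℝ) (f : V →ₗ[ℝ] ℝ)
    (α γ : ℝ) (hα : 0 < α) (hγ : 0 ≤ γ)
    (hcoer : ∀ v : V, α * ‖v‖ ^ 2 ≤ a v v)
    (hcont : ∀ v w : V, |a v w| ≤ γ * ‖v‖ * ‖w‖)
    (u : V) (hu : ∀ v : V, a u v = f v)
    (W : Submodule ℝ V) (uW : V) (hGal : ∀ w ∈ W, a uW w = f w)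
    (w : V) (hw : w ∈ W) (huWW : uW ∈ W) :
    ‖u - uW‖ ≤ (γ / α) * ‖u - w‖ := by
  set e := u - uW with he
  have horth : ∀ x ∈ W, a e x = 0 := by
    intro x hx
    have : a u x - a uW x = 0 := by rw [hu x, hGal x hx]; ring
    simpa [he, map_sub, LinearMap.sub_apply] using this
  have key : α * ‖e‖ ^ 2 ≤ γ * ‖e‖ * ‖u - w‖ := by
    have h1 : a e e = a e (u - w) := by
      have : a e (w - uW) = 0 := horth _ (W.sub_mem hw huWW)
      have expand : a e (u - w) + a e (w - uW) = a e e := by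
        rw [← map_add]; congr 1; rw [he]; abel
      linarith [expand, this]
    calc α * ‖e‖ ^ 2 ≤ a e e := hcoer e
      _ = a e (u - w) := h1
      _ ≤ |a e (u - w)| := le_abs_self _
      _ ≤ γ * ‖e‖ * ‖u - w‖ := hcont _ _
  rcases eq_or_lt_of_le (norm_nonneg e) with h0 | h0
  · rw [← h0]
    positivity
  · rw [div_mul_eq_mul_div, le_div_iff₀ hα]
    nlinarith [key]

/-- **Error split for the reduced-order solution w.r.t. the true solution.** `‖u - u^R‖ ≤ (γ/α)‖u_n - P_{V^R} u_n‖ + (γ/α)²‖u - P_{V_n} u‖`. -/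
theorem rom_error_split_true
    {V : Type*} [NormedAddCommGroup V] [InnerProductSpace ℝ V]
    (a : V →ₗ[ℝ] V →ₗ[ℝ] ℝ) (f : V →ₗ[ℝ] ℝ)
    (α γ : ℝ) (hα : 0 < α)
    (hcoer : ∀ v : V, α * ‖v‖ ^ 2 ≤ a v v)
    (hcont : ∀ v w : V, |a v w| ≤ γ * ‖v‖ * ‖w‖)
    (u : V) (hu : ∀ v : V, a u v = f v)
    (Vn VR : Submodule ℝ V) [FiniteDimensional ℝ ↥Vn] [FiniteDimensional ℝ ↥VR]
    (un : V) (hun : un ∈ Vn) (hGaln : ∀ w ∈ Vn, a un w = f w)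
    (uR : V) (huR : uR ∈ VR) (hGalR : ∀ w ∈ VR, a uR w = f w) :
    ‖u - uR‖ ≤ (γ / α) * ‖un - orthProj VR un‖ + (γ / α) ^ 2 * ‖u - orthProj Vn u‖ := by

  -- handle trivial space
  by_cases htriv : ∀ v : V, v = 0
  · have h1 : u - uR = 0 := htriv _
    have h2 : un - orthProj VR un = 0 := htriv _
    have h3 : u - orthProj Vn u = 0 := htriv _
    rw [h1, h2, h3]
    simp
  push_neg at htriv
  obtain ⟨v0, hv0⟩ := htriv
  have hv0n : 0 < ‖v0‖ := norm_pos_iff.mpr hv0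
  have hγ : 0 ≤ γ := by
    have := hcoer v0
    have h2 := hcont v0 v0
    have h3 := abs_nonneg (a v0 v0)
    nlinarith [le_abs_self (a v0 v0), mul_pos hv0n hv0n, mul_pos hα (mul_pos hv0n hv0n)]
  have hRdef : orthProj VR un = (VR.orthogonalProjection un : V) := by
    simp [orthProj, ‹FiniteDimensional ℝ ↥VR›]
  have hNdef : orthProj Vn u = (Vn.orthogonalProjection u : V) := by
    simp [orthProj, ‹FiniteDimensional ℝ ↥Vn›]
  have hRmem : orthProj VR un ∈ VR := by rw [hRdef]; exact (VR.orthogonalProjection un).2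
  have hNmem : orthProj Vn u ∈ Vn := by rw [hNdef]; exact (Vn.orthogonalProjection u).2
  have step1 : ‖u - uR‖ ≤ (γ / α) * ‖u - orthProj VR un‖ :=
    cea_aux a f α γ hα hγ hcoer hcont u hu VR uR hGalR _ hRmem huR
  have step2 : ‖u - orthProj VR un‖ ≤ ‖u - un‖ + ‖un - orthProj VR un‖ := by
    have : u - orthProj VR un = (u - un) + (un - orthProj VR un) := by abel
    rw [this]; exact norm_add_le _ _
  have step3 : ‖u - un‖ ≤ (γ / α) * ‖u - orthProj Vn u‖ :=
    cea_aux a f α γ hα hγ hcoer hcont u hu Vn un hGaln _ hNmem hun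
  have hq : 0 ≤ γ / α := div_nonneg hγ hα.le
  calc ‖u - uR‖ ≤ (γ / α) * ‖u - orthProj VR un‖ := step1
    _ ≤ (γ / α) * (‖u - un‖ + ‖un - orthProj VR un‖) := by
        exact mul_le_mul_of_nonneg_left step2 hq
    _ ≤ (γ / α) * ((γ / α) * ‖u - orthProj Vn u‖ + ‖un - orthProj VR un‖) := by
        apply mul_le_mul_of_nonneg_left _ hq
        linarith [step3]
    _ = (γ / α) * ‖un - orthProj VR un‖ + (γ / α) ^ 2 * ‖u - orthProj Vn u‖ := by ring
end

section
/- Suppose u ∈ V satisfies a(u, v) = f(v) for all v ∈ V. Let V_n, V^D and V^R be finite-dimensional subspaces of V with V^R ⊆ V^D. Let u_n be a Galerkin solution on V_n with u_n ∈ V^D, let u^D be a Galerkin solution on V^D, and let u^R be a Galerkin solution on V^R. Then ‖u_n − u^R‖_V ≤ (γ/α)² ‖u − P_{V_n} u‖_V + (γ/α) ‖u^D − P_{V^R} u^D‖_V. -/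
open scoped RealInnerProductSpace

lemma orthProj_mem {V : Type*} [NormedAddCommGroup V] [InnerProductSpace ℝ V]
    (K : Submodule ℝ V) [FiniteDimensional ℝ K] (x : V) : orthProj K x ∈ K := by
  classical
  unfold orthProj
  rw [dif_pos ‹_›]
  exact SetLike.coe_mem _

lemma div_bound {α γ : ℝ} (hα : 0 < α) (hγ : 0 ≤ γ) {V : Type*} [NormedAddCommGroup V]
    (e d : V) (h : α * ‖e‖ ^ 2 ≤ γ * ‖e‖ * ‖d‖) : ‖e‖ ≤ γ / α * ‖d‖ := by
  rcases (eq_or_lt_of_le (norm_nonneg e)).imp Eq.symm id with h0 | h0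
  · rw [h0]
    positivity
  · rw [div_mul_eq_mul_div, le_div_iff₀ hα]
    nlinarith [norm_nonneg d]

lemma cea {V : Type*} [NormedAddCommGroup V] [InnerProductSpace ℝ V]
    (a : V →ₗ[ℝ] V →ₗ[ℝ] ℝ) {α γ : ℝ} (hα : 0 < α) (hγ : 0 ≤ γ)
    (hcoer : ∀ v : V, α * ‖v‖ ^ 2 ≤ a v v)
    (hcont : ∀ v w : V, |a v w| ≤ γ * ‖v‖ * ‖w‖)
    {W : Submodule ℝ V} (ue uw : V) (huw : uw ∈ W)
    (horth : ∀ z ∈ W, a (ue - uw) z = 0)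
    (w : V) (hw : w ∈ W) : ‖ue - uw‖ ≤ γ / α * ‖ue - w‖ := by
  apply div_bound hα hγ
  have key : a (ue - uw) (ue - uw) = a (ue - uw) (ue - w) := by
    have h1 : a (ue - uw) (ue - uw) = a (ue - uw) ((ue - w) + (w - uw)) := by
      congr 1; abel
    rw [h1, map_add, horth (w - uw) (W.sub_mem hw huw), add_zero]
  calc α * ‖ue - uw‖ ^ 2 ≤ a (ue - uw) (ue - uw) := hcoer _
    _ = a (ue - uw) (ue - w) := key
    _ ≤ |a (ue - uw) (ue - w)| := le_abs_self _
    _ ≤ γ * ‖ue - uw‖ * ‖ue - w‖ := hcont _ _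

/-- **Alternative error bound for the reduced-order solution with respect to the snapshot**, via the Galerkin solution `u^D` on the full POD space `V^D ⊇ V^R` containing the snapshot `u_n`. -/
theorem rom_error_wrt_snapshot_via_full_pod
    {V : Type*} [NormedAddCommGroup V] [InnerProductSpace ℝ V]
    (a : V →ₗ[ℝ] V →ₗ[ℝ] ℝ) (f : V →ₗ[ℝ] ℝ)
    (α γ : ℝ) (hα : 0 < α)
    (hcoer : ∀ v : V, α * ‖v‖ ^ 2 ≤ a v v)
    (hcont : ∀ v w : V, |a v w| ≤ γ * ‖v‖ * ‖w‖)
    (u : V) (hu : ∀ v : V, a u v = f v)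
    (Vn VD VR : Submodule ℝ V)
    [FiniteDimensional ℝ ↥Vn] [FiniteDimensional ℝ ↥VD] [FiniteDimensional ℝ ↥VR]
    (hRD : VR ≤ VD)
    (un : V) (hun : un ∈ Vn) (hunD : un ∈ VD) (hGaln : ∀ w ∈ Vn, a un w = f w)
    (uD : V) (huD : uD ∈ VD) (hGalD : ∀ w ∈ VD, a uD w = f w)
    (uR : V) (huR : uR ∈ VR) (hGalR : ∀ w ∈ VR, a uR w = f w) :
    ‖un - uR‖ ≤ (γ / α) ^ 2 * ‖u - orthProj Vn u‖
      + (γ / α) * ‖uD - orthProj VR uD‖ := by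
  by_cases hγ : 0 ≤ γ
  · -- main case
    have hq : 0 ≤ γ / α := div_nonneg hγ hα.le
    -- Céa: ‖u - un‖ ≤ (γ/α) ‖u - P_{Vn} u‖
    have hA : ‖u - un‖ ≤ γ / α * ‖u - orthProj Vn u‖ := by
      refine cea a hα hγ hcoer hcont u un hun ?_ _ (orthProj_mem Vn u)
      intro z hz
      simp [map_sub, LinearMap.sub_apply, hu z, hGaln z hz]
    -- ‖uD - uR‖ ≤ (γ/α) ‖uD - P_{VR} uD‖
    have hC : ‖uD - uR‖ ≤ γ / α * ‖uD - orthProj VR uD‖ := by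
      refine cea a hα hγ hcoer hcont uD uR huR ?_ _ (orthProj_mem VR uD)
      intro z hz
      simp [map_sub, LinearMap.sub_apply, hGalD z (hRD hz), hGalR z hz]
    -- ‖un - uD‖ ≤ (γ/α) ‖u - un‖
    have hB : ‖un - uD‖ ≤ γ / α * ‖u - un‖ := by
      apply div_bound hα hγ
      have horthD : a (u - uD) (un - uD) = 0 := by
        simp only [map_sub, LinearMap.sub_apply]
        rw [hu, hu, hGalD un hunD, hGalD uD huD]
        ring
      have key : a (un - uD) (un - uD) = a (un - u) (un - uD) := by
        have h1 : a (un - uD) (un - uD)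
            = a (un - u) (un - uD) + a (u - uD) (un - uD) := by
          rw [← LinearMap.add_apply, ← map_add]
          congr 2; abel
        rw [h1, horthD, add_zero]
      calc α * ‖un - uD‖ ^ 2 ≤ a (un - uD) (un - uD) := hcoer _
        _ = a (un - u) (un - uD) := key
        _ ≤ |a (un - u) (un - uD)| := le_abs_self _
        _ ≤ γ * ‖un - u‖ * ‖un - uD‖ := hcont _ _
        _ = γ * ‖un - uD‖ * ‖u - un‖ := by rw [norm_sub_rev un u]; ring
    have h1 : ‖un - uD‖ ≤ (γ / α) ^ 2 * ‖u - orthProj Vn u‖ := by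
      calc ‖un - uD‖ ≤ γ / α * ‖u - un‖ := hB
        _ ≤ γ / α * (γ / α * ‖u - orthProj Vn u‖) :=
            mul_le_mul_of_nonneg_left hA hq
        _ = (γ / α) ^ 2 * ‖u - orthProj Vn u‖ := by ring
    have hsplit : un - uR = (un - uD) + (uD - uR) := by abel
    calc ‖un - uR‖ = ‖(un - uD) + (uD - uR)‖ := by rw [hsplit]
      _ ≤ ‖un - uD‖ + ‖uD - uR‖ := norm_add_le _ _
      _ ≤ (γ / α) ^ 2 * ‖u - orthProj Vn u‖ + γ / α * ‖uD - orthProj VR uD‖ :=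
          add_le_add h1 hC
  · -- γ < 0 forces V to be trivial
    push_neg at hγ
    have hv : ∀ v : V, v = 0 := by
      intro v
      by_contra hv0
      have h0 : 0 < ‖v‖ := norm_pos_iff.mpr hv0
      have h1 := hcoer v
      have h2 : a v v ≤ |a v v| := le_abs_self _
      have h3 := hcont v v
      have hp : 0 < ‖v‖ * ‖v‖ := mul_pos h0 h0
      nlinarith [hp]
    rw [hv un, hv uR, hv u, hv uD, hv (orthProj Vn 0), hv (orthProj VR 0)]
    simp
end
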